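/- Let π̂ be a probability distribution on ℝᵈ, Ω ⊆ ℝᵈ a measurable set, and π a second distribution such that (1/2)·π(S) ≤ π̂(S) ≤ 2·π(S) for all measurable S ⊆ Ω, where π restricted to Ω satisfies the log-isoperimetric inequality with constant ψ. Then π̂ restricted to Ω satisfies the log-isoperimetric inequality with constant 8ψ: for any partition S₁, S₂, S₃ of Ω, π̂_Ω(S₃) ≥ (1/(16ψ)) · d(S₁,S₂) · min(π̂_Ω(S₁), π̂_Ω(S₂)) · √(log(1 + 1/min(π̂_Ω(S₁), π̂_Ω(S₂)))). -/

import Mathlib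

open MeasureTheory

/-- Key: `log (1+u) / u` is antitone, via Bernoulli's inequality. -/
lemma key_log_stmt19 (u v : ℝ) (hv : 0 < v) (huv : v ≤ u) :
    v * Real.log (1 + u) ≤ u * Real.log (1 + v) := by
  have hu : 0 < u := lt_of_lt_of_le hv huv
  have hp : (1 : ℝ) ≤ u / v := (one_le_div hv).mpr huv
  have hb : 1 + (u / v) * v ≤ (1 + v) ^ (u / v) :=
    one_add_mul_self_le_rpow_one_add (by linarith) hp
  rw [div_mul_cancel₀ _ (ne_of_gt hv)] at hb
  have hlog : Real.log (1 + u) ≤ (u / v) * Real.log (1 + v) := by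
    calc Real.log (1 + u) ≤ Real.log ((1 + v) ^ (u / v)) :=
          Real.log_le_log (by linarith) hb
      _ = (u / v) * Real.log (1 + v) := Real.log_rpow (by linarith) _
  have := mul_le_mul_of_nonneg_left hlog hv.le
  calc v * Real.log (1 + u) ≤ v * ((u / v) * Real.log (1 + v)) := this
    _ = u * Real.log (1 + v) := by field_simp

/-- `x ↦ x √(log (1 + 1/x))` is monotone on `(0, ∞)`. -/
lemma gmono_stmt19 (a b : ℝ) (ha : 0 < a) (hab : a ≤ b) :
    a * Real.sqrt (Real.log (1 + 1 / a)) ≤ b * Real.sqrt (Real.log (1 + 1 / b)) := by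
  have hb : 0 < b := lt_of_lt_of_le ha hab
  have hia : 0 < 1 / a := by positivity
  have hib : 0 < 1 / b := by positivity
  have hLa : 0 ≤ Real.log (1 + 1 / a) := Real.log_nonneg (by linarith)
  have hLb : 0 ≤ Real.log (1 + 1 / b) := Real.log_nonneg (by linarith)
  have hk := key_log_stmt19 (1 / a) (1 / b) hib (one_div_le_one_div_of_le ha hab)
  -- from (1/b) * La ≤ (1/a) * Lb deduce a^2 * La ≤ b^2 * Lb
  have hsq : a ^ 2 * Real.log (1 + 1 / a) ≤ b ^ 2 * Real.log (1 + 1 / b) := by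
    have h1 : a * Real.log (1 + 1 / a) ≤ b * Real.log (1 + 1 / b) := by
      have := mul_le_mul_of_nonneg_left hk (by positivity : (0:ℝ) ≤ a * b)
      calc a * Real.log (1 + 1 / a)
          = a * b * (1 / b * Real.log (1 + 1 / a)) := by field_simp
        _ ≤ a * b * (1 / a * Real.log (1 + 1 / b)) := this
        _ = b * Real.log (1 + 1 / b) := by field_simp
    calc a ^ 2 * Real.log (1 + 1 / a) = a * (a * Real.log (1 + 1 / a)) := by ring
      _ ≤ a * (b * Real.log (1 + 1 / b)) := by
          exact mul_le_mul_of_nonneg_left h1 ha.le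
      _ ≤ b * (b * Real.log (1 + 1 / b)) := by
          exact mul_le_mul_of_nonneg_right hab (by positivity)
      _ = b ^ 2 * Real.log (1 + 1 / b) := by ring
  have e1 : a * Real.sqrt (Real.log (1 + 1 / a))
      = Real.sqrt (a ^ 2 * Real.log (1 + 1 / a)) := by
    rw [Real.sqrt_mul (by positivity), Real.sqrt_sq ha.le]
  have e2 : b * Real.sqrt (Real.log (1 + 1 / b))
      = Real.sqrt (b ^ 2 * Real.log (1 + 1 / b)) := by
    rw [Real.sqrt_mul (by positivity), Real.sqrt_sq hb.le]
  rw [e1, e2]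
  exact Real.sqrt_le_sqrt hsq

/-- Pure real-number core of the argument. -/
lemma core_stmt19 (ψ δ P Ph M Mh a3 b3 : ℝ)
    (hψ : 0 < ψ) (hδ : 0 ≤ δ)
    (hP : 0 < P) (hPh : 0 < Ph) (hM : 0 < M) (hMh : 0 < Mh)
    (hPh2P : Ph ≤ 2 * P)
    (hMh2M : Mh ≤ 2 * M)
    (ha3 : a3 ≤ 2 * b3) (hb3 : 0 ≤ b3)
    (hiso : 1 / (2 * ψ) * δ * (M / P) * Real.sqrt (Real.log (1 + 1 / (M / P))) ≤ a3 / P) :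
    1 / (16 * ψ) * δ * (Mh / Ph) * Real.sqrt (Real.log (1 + 1 / (Mh / Ph))) ≤ b3 / Ph := by
  set m : ℝ := M / P with hm_def
  set t : ℝ := 2 * m * (P / Ph) with ht_def
  have hm : 0 < m := by positivity
  have ht : 0 < t := by positivity
  have hmh : 0 < Mh / Ph := by positivity
  have hmht : Mh / Ph ≤ t := by
    rw [ht_def, hm_def]
    rw [div_le_iff₀ hPh]
    have : 2 * (M / P) * (P / Ph) * Ph = 2 * M := by field_simp
    rw [this]; exact hMh2M
  have hmt : m ≤ t := by
    rw [ht_def]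
    have h2 : (1 : ℝ) / 2 ≤ P / Ph := by
      rw [le_div_iff₀ hPh]; linarith
    calc m = 2 * m * (1 / 2) := by ring
      _ ≤ 2 * m * (P / Ph) := by
          exact mul_le_mul_of_nonneg_left h2 (by positivity)
  have h1t : 1 / t ≤ 1 / m := one_div_le_one_div_of_le hm hmt
  set L : ℝ := Real.sqrt (Real.log (1 + 1 / m)) with hL_def
  have hL : 0 ≤ L := Real.sqrt_nonneg _
  have hg1 : Mh / Ph * Real.sqrt (Real.log (1 + 1 / (Mh / Ph)))
      ≤ t * Real.sqrt (Real.log (1 + 1 / t)) := gmono_stmt19 _ _ hmh hmht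
  have hg2 : t * Real.sqrt (Real.log (1 + 1 / t)) ≤ t * L := by
    apply mul_le_mul_of_nonneg_left _ ht.le
    apply Real.sqrt_le_sqrt
    apply Real.log_le_log (by positivity)
    linarith
  have hg : Mh / Ph * Real.sqrt (Real.log (1 + 1 / (Mh / Ph))) ≤ 2 * m * (P / Ph) * L :=
    (hg1.trans hg2).trans_eq (by rw [ht_def])
  calc 1 / (16 * ψ) * δ * (Mh / Ph) * Real.sqrt (Real.log (1 + 1 / (Mh / Ph)))
      = (1 / (16 * ψ) * δ) * (Mh / Ph * Real.sqrt (Real.log (1 + 1 / (Mh / Ph)))) := by ring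
    _ ≤ (1 / (16 * ψ) * δ) * (2 * m * (P / Ph) * L) :=
        mul_le_mul_of_nonneg_left hg (by positivity)
    _ = (1 / (2 * ψ) * δ * m * L) * (P / (4 * Ph)) := by
        field_simp
        ring
    _ ≤ (a3 / P) * (P / (4 * Ph)) :=
        mul_le_mul_of_nonneg_right hiso (by positivity)
    _ = a3 / (4 * Ph) := by field_simp
    _ ≤ (2 * b3) / (4 * Ph) := by gcongr
    _ = b3 / (2 * Ph) := by ring
    _ ≤ b3 / Ph := by gcongr; linarith

theorem stmt19 {d : ℕ}
    (pr prh : Measure (EuclideanSpace ℝ (Fin d)))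
    [IsProbabilityMeasure pr] [IsProbabilityMeasure prh]
    (Ω : Set (EuclideanSpace ℝ (Fin d))) (hΩ : MeasurableSet Ω)
    (ψ : ℝ) (hψ : 0 < ψ)
    (hcomp : ∀ S ⊆ Ω, MeasurableSet S → pr S / 2 ≤ prh S ∧ prh S ≤ 2 * pr S)
    (hiso : ∀ S₁ S₂ S₃ : Set (EuclideanSpace ℝ (Fin d)),
      MeasurableSet S₁ → MeasurableSet S₂ → MeasurableSet S₃ →
      S₁ ∪ S₂ ∪ S₃ = Ω → Disjoint S₁ S₂ → Disjoint S₁ S₃ → Disjoint S₂ S₃ →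
      ∀ δ : ℝ, 0 ≤ δ → (∀ a ∈ S₁, ∀ b ∈ S₂, δ ≤ dist a b) →
      1 / (2 * ψ) * δ *
          min ((pr S₁).toReal / (pr Ω).toReal) ((pr S₂).toReal / (pr Ω).toReal) *
          Real.sqrt (Real.log (1 +
            1 / min ((pr S₁).toReal / (pr Ω).toReal) ((pr S₂).toReal / (pr Ω).toReal))) ≤
        (pr S₃).toReal / (pr Ω).toReal) :
    ∀ S₁ S₂ S₃ : Set (EuclideanSpace ℝ (Fin d)),
      MeasurableSet S₁ → MeasurableSet S₂ → MeasurableSet S₃ →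
      S₁ ∪ S₂ ∪ S₃ = Ω → Disjoint S₁ S₂ → Disjoint S₁ S₃ → Disjoint S₂ S₃ →
      ∀ δ : ℝ, 0 ≤ δ → (∀ a ∈ S₁, ∀ b ∈ S₂, δ ≤ dist a b) →
      1 / (16 * ψ) * δ *
          min ((prh S₁).toReal / (prh Ω).toReal) ((prh S₂).toReal / (prh Ω).toReal) *
          Real.sqrt (Real.log (1 +
            1 / min ((prh S₁).toReal / (prh Ω).toReal) ((prh S₂).toReal / (prh Ω).toReal))) ≤
        (prh S₃).toReal / (prh Ω).toReal := by
  intro S₁ S₂ S₃ h₁ h₂ h₃ hunion h12 h13 h23 δ hδ hdist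
  -- real-valued comparison inequalities
  have hcr : ∀ S : Set (EuclideanSpace ℝ (Fin d)), S ⊆ Ω → MeasurableSet S →
      (pr S).toReal / 2 ≤ (prh S).toReal ∧ (prh S).toReal ≤ 2 * (pr S).toReal := by
    intro S hs hms
    obtain ⟨hl, hr⟩ := hcomp S hs hms
    constructor
    · have := ENNReal.toReal_mono (measure_ne_top prh S) hl
      rwa [ENNReal.toReal_div, ENNReal.toReal_ofNat] at this
    · have := ENNReal.toReal_mono
        (ENNReal.mul_ne_top (by simp) (measure_ne_top pr S)) hr
      rwa [ENNReal.toReal_mul, ENNReal.toReal_ofNat] at this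
  have hS1Ω : S₁ ⊆ Ω := by rw [← hunion]; intro x hx; exact Or.inl (Or.inl hx)
  have hS2Ω : S₂ ⊆ Ω := by rw [← hunion]; intro x hx; exact Or.inl (Or.inr hx)
  have hS3Ω : S₃ ⊆ Ω := by rw [← hunion]; intro x hx; exact Or.inr hx
  set P : ℝ := (pr Ω).toReal with hP_def
  set Ph : ℝ := (prh Ω).toReal with hPh_def
  set a1 : ℝ := (pr S₁).toReal
  set a2 : ℝ := (pr S₂).toReal
  set a3 : ℝ := (pr S₃).toReal
  set b1 : ℝ := (prh S₁).toReal
  set b2 : ℝ := (prh S₂).toReal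
  set b3 : ℝ := (prh S₃).toReal
  obtain ⟨hΩl, hΩr⟩ := hcr Ω (subset_refl _) hΩ
  obtain ⟨h1l, h1r⟩ := hcr S₁ hS1Ω h₁
  obtain ⟨h2l, h2r⟩ := hcr S₂ hS2Ω h₂
  obtain ⟨h3l, h3r⟩ := hcr S₃ hS3Ω h₃
  have ha1 : 0 ≤ a1 := ENNReal.toReal_nonneg
  have ha2 : 0 ≤ a2 := ENNReal.toReal_nonneg
  have hb1 : 0 ≤ b1 := ENNReal.toReal_nonneg
  have hb2 : 0 ≤ b2 := ENNReal.toReal_nonneg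
  have hb3 : 0 ≤ b3 := ENNReal.toReal_nonneg
  have hPh0 : 0 ≤ Ph := ENNReal.toReal_nonneg
  -- rewrite the min of quotients
  rw [min_div_div_right hPh0 b1 b2]
  set Mh : ℝ := min b1 b2 with hMh_def
  rcases eq_or_lt_of_le (le_min hb1 hb2 : (0:ℝ) ≤ Mh) with hMh0 | hMh0
  · -- degenerate case: Mh = 0
    have hMh0' : Mh = 0 := hMh0.symm
    rw [hMh0']
    simp only [zero_div, mul_zero, zero_mul]
    positivity
  -- main case
  rcases eq_or_lt_of_le hPh0 with hPh' | hPh'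
  · exfalso
    have : b1 ≤ 2 * P := h1r.trans (by
      have : a1 ≤ P := by
        apply ENNReal.toReal_mono (measure_ne_top pr Ω)
        exact measure_mono hS1Ω
      linarith)
    have hP0 : P ≤ 2 * Ph := by linarith [hΩl]
    have hb1pos : 0 < b1 := lt_of_lt_of_le hMh0 (min_le_left _ _)
    nlinarith
  have hPpos : 0 < P := by linarith [hΩr]
  have ha1pos : 0 < a1 := by
    have : 0 < b1 := lt_of_lt_of_le hMh0 (min_le_left _ _)
    linarith
  have ha2pos : 0 < a2 := by
    have : 0 < b2 := lt_of_lt_of_le hMh0 (min_le_right _ _)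
    linarith
  have hkey := hiso S₁ S₂ S₃ h₁ h₂ h₃ hunion h12 h13 h23 δ hδ hdist
  rw [min_div_div_right (le_of_lt hPpos) a1 a2] at hkey
  set M : ℝ := min a1 a2 with hM_def
  have hMpos : 0 < M := lt_min ha1pos ha2pos
  have hMh2M : Mh ≤ 2 * M := by
    have hb1' : b1 ≤ 2 * a1 := h1r
    have hb2' : b2 ≤ 2 * a2 := h2r
    rcases le_total a1 a2 with h | h
    · rw [hM_def, min_eq_left h]
      exact le_trans (min_le_left _ _) hb1'
    · rw [hM_def, min_eq_right h]
      exact le_trans (min_le_right _ _) hb2'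
  exact core_stmt19 ψ δ P Ph M Mh a3 b3 hψ hδ hPpos hPh' hMpos hMh0
    hΩr hMh2M (by linarith) hb3 hkey
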